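/- Let a ≥ 3 be an odd integer. Then the quotient ⟨a, a+1⟩/(a−1) equals the numerical semigroup generated by the integers (a+1)/2, (a+3)/2, ..., a−1, a (that is, all integers m with (a+1)/2 ≤ m ≤ a). -/

import Mathlib

/-- Proposition 2.8 (odd case): for odd `a ≥ 3`,
`⟨a, a+1⟩/(a-1)` is generated by the integers `(a+1)/2, (a+3)/2, ..., a-1, a`. -/
theorem quotient_a_a1_by_am1_odd
    (a : ℕ) (ha : 3 ≤ a) (hodd : Odd a) :
    {m : ℕ | (a - 1) * m ∈ AddSubmonoid.closure ({a, a + 1} : Set ℕ)} =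
      ↑(AddSubmonoid.closure (Set.Icc ((a + 1) / 2) a)) := by
  obtain ⟨k, rfl⟩ := hodd
  have hk : 1 ≤ k := by omega
  have h2 : (2 * k + 1 + 1) / 2 = k + 1 := by omega
  have h1 : 2 * k + 1 - 1 = 2 * k := by omega
  rw [h2, h1]
  have mem_of_ge : ∀ m, k + 1 ≤ m →
      m ∈ AddSubmonoid.closure (Set.Icc (k + 1) (2 * k + 1)) := by
    intro m
    induction m using Nat.strong_induction_on with
    | _ m ih =>
      intro hm
      by_cases h : m ≤ 2 * k + 1
      · exact AddSubmonoid.subset_closure ⟨hm, h⟩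
      · have hmem := ih (m - (k + 1)) (by omega) (by omega)
        have hgen : (k + 1) ∈ AddSubmonoid.closure (Set.Icc (k + 1) (2 * k + 1)) :=
          AddSubmonoid.subset_closure ⟨le_refl _, by omega⟩
        have := AddSubmonoid.add_mem _ hgen hmem
        rwa [show k + 1 + (m - (k + 1)) = m by omega] at this
  ext m
  simp only [Set.mem_setOf_eq, SetLike.mem_coe]
  constructor
  · intro hm
    obtain ⟨x, y, heq⟩ := (AddSubmonoid.mem_closure_pair _ _ _).mp hm
    simp only [smul_eq_mul] at heq
    rcases Nat.eq_zero_or_pos m with rfl | hm0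
    · exact AddSubmonoid.zero_mem _
    · refine mem_of_ge m ?_
      by_contra hlt
      push_neg at hlt
      rcases le_or_gt m (x + y) with hxy | hxy
      · nlinarith [mul_le_mul_left hxy (2 * k + 1)]
      · nlinarith [mul_le_mul_left (Nat.succ_le_of_lt hxy) (2 * k + 2)]
  · intro hm
    induction hm using AddSubmonoid.closure_induction with
    | mem z hz =>
      obtain ⟨hz1, hz2⟩ := hz
      obtain ⟨d, rfl⟩ : ∃ d, z = k + 1 + d := ⟨z - (k + 1), by omega⟩
      obtain ⟨e, rfl⟩ : ∃ e, k = d + e := ⟨k - d, by omega⟩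
      refine (AddSubmonoid.mem_closure_pair _ _ _).mpr ⟨2 * d, e, ?_⟩
      simp only [smul_eq_mul]
      ring
    | zero => simpa using AddSubmonoid.zero_mem _
    | add x y _ _ hx hy =>
      rw [mul_add]
      exact AddSubmonoid.add_mem _ hx hy
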